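/- Let ρ(u,z) = |u|^{1/2} + Σ_{i=1}^n |z_i|^{1/(2i-1)} and let d*((s,x),(t,y)) := ρ(t−s, x − θ_{s,t}(y)), d((s,x),(t,y)) := ρ(t−s, θ_{t,s}(x) − y), where θ is the flow of a vector field F with strict cascade (subdiagonal) structure: F_1(t,x) = F_1(t,x_1) and F_i(t,x) = F_i(t, x_{i-1}, x_i) for i ∈ [2,n], F Lipschitz uniformly in time. Then there exists C = C(F,T,n,d) ≥ 1 such that for ALL (s,x),(t,y) ∈ [−T,T] × ℝ^{nd} (with no smallness restriction on the distance), C^{-1} d*((s,x),(t,y)) ≤ d((s,x),(t,y)) ≤ C d*((s,x),(t,y)). -/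

import Mathlib

open scoped BigOperators

/-- Euclidean norm of the i-th d-dimensional block of z ∈ ℝ^{nd}. -/
noncomputable def blockNorm (n d : ℕ) (z : EuclideanSpace ℝ (Fin n × Fin d)) (i : Fin n) : ℝ :=
  Real.sqrt (∑ q : Fin d, (z (i, q)) ^ 2)

/-- The parabolic quasi-norm ρ(u,z) = |u|^{1/2} + Σ_{i=1}^n |z_i|^{1/(2i-1)}. -/
noncomputable def rho (n d : ℕ) (u : ℝ) (z : EuclideanSpace ℝ (Fin n × Fin d)) : ℝ :=
  |u| ^ ((1:ℝ)/2) + ∑ i : Fin n, blockNorm n d z i ^ ((1:ℝ) / (2 * (i:ℕ) + 1))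

namespace Stmt18Aux

variable {n d : ℕ}

/-- block projection as a continuous linear map -/
noncomputable def blockCLM (n d : ℕ) (k : Fin n) :
    EuclideanSpace ℝ (Fin n × Fin d) →L[ℝ] EuclideanSpace ℝ (Fin d) :=
  LinearMap.toContinuousLinearMap
    { toFun := fun z => WithLp.toLp 2 (fun q => z (k, q))
      map_add' := fun a b => rfl
      map_smul' := fun c a => rfl }

@[simp] lemma blockCLM_apply (k : Fin n) (z : EuclideanSpace ℝ (Fin n × Fin d)) (q : Fin d) :
    blockCLM n d k z q = z (k, q) := rfl

/-- truncation (zeroing out blocks above i) as a continuous linear map -/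
noncomputable def truncCLM (n d : ℕ) (i : Fin n) :
    EuclideanSpace ℝ (Fin n × Fin d) →L[ℝ] EuclideanSpace ℝ (Fin n × Fin d) :=
  LinearMap.toContinuousLinearMap
    { toFun := fun z => WithLp.toLp 2 (fun p => if (p.1 : ℕ) ≤ (i : ℕ) then z p else 0)
      map_add' := fun a b => by
        ext p
        by_cases h : p.1 ≤ i <;> simp [h, PiLp.add_apply]
      map_smul' := fun c a => by
        ext p
        by_cases h : p.1 ≤ i <;> simp [h, PiLp.smul_apply] }

@[simp] lemma truncCLM_apply (i : Fin n) (z : EuclideanSpace ℝ (Fin n × Fin d))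
    (p : Fin n × Fin d) :
    truncCLM n d i z p = if p.1 ≤ i then z p else 0 := rfl

lemma blockNorm_nonneg (z : EuclideanSpace ℝ (Fin n × Fin d)) (k : Fin n) :
    0 ≤ blockNorm n d z k := Real.sqrt_nonneg _

lemma blockNorm_eq_norm (k : Fin n) (z : EuclideanSpace ℝ (Fin n × Fin d)) :
    blockNorm n d z k = ‖blockCLM n d k z‖ := by
  rw [EuclideanSpace.norm_eq, blockNorm]
  congr 1
  refine Finset.sum_congr rfl fun q _ => ?_
  rw [blockCLM_apply, Real.norm_eq_abs, sq_abs]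

lemma sq_blockNorm (z : EuclideanSpace ℝ (Fin n × Fin d)) (k : Fin n) :
    blockNorm n d z k ^ 2 = ∑ q : Fin d, (z (k, q)) ^ 2 :=
  Real.sq_sqrt (Finset.sum_nonneg fun q _ => sq_nonneg _)

lemma norm_trunc_eq (i : Fin n) (z : EuclideanSpace ℝ (Fin n × Fin d)) :
    ‖truncCLM n d i z‖ = Real.sqrt (∑ k ∈ Finset.Iic i, blockNorm n d z k ^ 2) := by
  rw [EuclideanSpace.norm_eq]
  congr 1
  rw [Fintype.sum_prod_type]
  rw [← Finset.sum_subset (Finset.subset_univ (Finset.Iic i))]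
  · refine Finset.sum_congr rfl fun k hk => ?_
    rw [sq_blockNorm]
    refine Finset.sum_congr rfl fun q _ => ?_
    rw [truncCLM_apply]
    rw [Finset.mem_Iic] at hk
    simp [hk]
  · intro k _ hk
    rw [Finset.mem_Iic] at hk
    simp [truncCLM_apply, hk]

lemma blockNorm_le_norm_trunc {i k : Fin n} (hk : k ≤ i)
    (z : EuclideanSpace ℝ (Fin n × Fin d)) :
    blockNorm n d z k ≤ ‖truncCLM n d i z‖ := by
  rw [norm_trunc_eq]
  have h1 : blockNorm n d z k ^ 2 ≤ ∑ j ∈ Finset.Iic i, blockNorm n d z j ^ 2 :=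
    Finset.single_le_sum (f := fun j => blockNorm n d z j ^ 2) (fun j _ => sq_nonneg _)
      (Finset.mem_Iic.mpr hk)
  calc blockNorm n d z k = Real.sqrt (blockNorm n d z k ^ 2) :=
        (Real.sqrt_sq (blockNorm_nonneg z k)).symm
    _ ≤ _ := Real.sqrt_le_sqrt h1

lemma sum_sq_le_sq_sum {s : Finset (Fin n)} {f : Fin n → ℝ} (hf : ∀ j, 0 ≤ f j) :
    (∑ k ∈ s, f k ^ 2) ≤ (∑ k ∈ s, f k) ^ 2 := by
  classical
  induction s using Finset.induction_on with
  | empty => simp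
  | @insert a s ha ih =>
    rw [Finset.sum_insert ha, Finset.sum_insert ha]
    have h1 : 0 ≤ f a := hf a
    have h2 : 0 ≤ ∑ k ∈ s, f k := Finset.sum_nonneg fun k _ => hf k
    nlinarith [ih]

lemma sqrt_sum_sq_le_sum {s : Finset (Fin n)} {f : Fin n → ℝ} (hf : ∀ j, 0 ≤ f j) :
    Real.sqrt (∑ k ∈ s, f k ^ 2) ≤ ∑ k ∈ s, f k := by
  have := Real.sqrt_le_sqrt (sum_sq_le_sq_sum (s := s) hf)
  rwa [Real.sqrt_sq (Finset.sum_nonneg fun k _ => hf k)] at this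

lemma norm_trunc_le_sum (i : Fin n) (z : EuclideanSpace ℝ (Fin n × Fin d)) :
    ‖truncCLM n d i z‖ ≤ ∑ k ∈ Finset.Iic i, blockNorm n d z k := by
  rw [norm_trunc_eq]
  exact sqrt_sum_sq_le_sum fun j => blockNorm_nonneg z j

lemma blockNorm_le_norm (z : EuclideanSpace ℝ (Fin n × Fin d)) (k : Fin n) :
    blockNorm n d z k ≤ ‖z‖ := by
  rw [EuclideanSpace.norm_eq, blockNorm]
  apply Real.sqrt_le_sqrt
  rw [Fintype.sum_prod_type]
  have : ∑ q : Fin d, z (k, q) ^ 2 = ∑ q : Fin d, ‖z (k, q)‖ ^ 2 := by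
    refine Finset.sum_congr rfl fun q _ => ?_
    rw [Real.norm_eq_abs, sq_abs]
  rw [this]
  exact Finset.single_le_sum (f := fun k' => ∑ q : Fin d, ‖z (k', q)‖ ^ 2)
    (fun j _ => Finset.sum_nonneg fun q _ => sq_nonneg _) (Finset.mem_univ k)

lemma sum_block (f : Fin n × Fin d → ℝ) (k : Fin n) :
    ∑ p ∈ Finset.univ.filter (fun p : Fin n × Fin d => p.1 = k), f p = ∑ q : Fin d, f (k, q) := by
  classical
  rw [Finset.sum_filter, Fintype.sum_prod_type]
  rw [Finset.sum_eq_single k]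
  · simp
  · intro b _ hb
    simp [hb]
  · simp

lemma casc_pred (k : Fin n) : ∃ k' : Fin n, (k' : ℕ) ≤ (k : ℕ) ∧ (k : ℕ) ≤ (k' : ℕ) + 1 ∧
    (∀ m : ℕ, (m = (k : ℕ) ∨ m + 1 = (k : ℕ)) → m = (k : ℕ) ∨ m = (k' : ℕ)) := by
  refine ⟨⟨(k : ℕ) - 1, lt_of_le_of_lt (Nat.sub_le _ _) k.2⟩, ?_, ?_, ?_⟩ <;>
    simp only [] <;> omega

variable {κ : NNReal} {F : ℝ → EuclideanSpace ℝ (Fin n × Fin d) → EuclideanSpace ℝ (Fin n × Fin d)}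

lemma casc_block_lip
    (hLip : ∀ t, LipschitzWith κ (F t))
    (hcasc : ∀ (t : ℝ) (a b : EuclideanSpace ℝ (Fin n × Fin d)) (k : Fin n),
      (∀ p : Fin n × Fin d, ((p.1:ℕ) = (k:ℕ) ∨ (p.1:ℕ) + 1 = (k:ℕ)) → a p = b p) →
      ∀ q : Fin d, F t a (k, q) = F t b (k, q))
    (t : ℝ) (a b : EuclideanSpace ℝ (Fin n × Fin d)) (k k' : Fin n)
    (hcov : ∀ m : ℕ, (m = (k : ℕ) ∨ m + 1 = (k : ℕ)) → m = (k : ℕ) ∨ m = (k' : ℕ)) :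
    blockNorm n d (F t a - F t b) k ≤
      (κ : ℝ) * (blockNorm n d (a - b) k + blockNorm n d (a - b) k') := by
  classical
  set a' : EuclideanSpace ℝ (Fin n × Fin d) :=
    WithLp.toLp 2 (fun p => if ((p.1:ℕ) = (k:ℕ) ∨ (p.1:ℕ) + 1 = (k:ℕ)) then a p else b p) with ha'
  have hFa : ∀ q : Fin d, F t a (k, q) = F t a' (k, q) := by
    refine hcasc t a a' k (fun p hp => ?_)
    simp only [ha', if_pos hp]
  have h1 : blockNorm n d (F t a - F t b) k = blockNorm n d (F t a' - F t b) k := by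
    unfold blockNorm
    congr 1
    refine Finset.sum_congr rfl fun q _ => ?_
    rw [PiLp.sub_apply, PiLp.sub_apply, hFa q]
  have h2 : blockNorm n d (F t a' - F t b) k ≤ ‖F t a' - F t b‖ := blockNorm_le_norm _ _
  have h3 : ‖F t a' - F t b‖ ≤ (κ : ℝ) * ‖a' - b‖ := by
    have := (hLip t).dist_le_mul a' b
    rwa [dist_eq_norm, dist_eq_norm] at this
  have h4 : ‖a' - b‖ ≤ blockNorm n d (a - b) k + blockNorm n d (a - b) k' := by
    have hsub : ∀ p : Fin n × Fin d, (a' - b) p = if ((p.1:ℕ) = (k:ℕ) ∨ (p.1:ℕ) + 1 = (k:ℕ))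
        then (a - b) p else 0 := by
      intro p
      by_cases hp : ((p.1:ℕ) = (k:ℕ) ∨ (p.1:ℕ) + 1 = (k:ℕ)) <;>
        simp [ha', PiLp.sub_apply, hp]
    have e1 : ‖a' - b‖ = Real.sqrt (∑ p ∈ Finset.univ.filter
        (fun p : Fin n × Fin d => ((p.1:ℕ) = (k:ℕ) ∨ (p.1:ℕ) + 1 = (k:ℕ))),
        ((a - b) p) ^ 2) := by
      rw [EuclideanSpace.norm_eq]
      congr 1
      rw [Finset.sum_filter]
      refine Finset.sum_congr rfl fun p _ => ?_
      rw [hsub p, Real.norm_eq_abs, sq_abs]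
      by_cases hp : ((p.1:ℕ) = (k:ℕ) ∨ (p.1:ℕ) + 1 = (k:ℕ)) <;> simp [hp]
    rw [e1]
    have hsubset : Finset.univ.filter
        (fun p : Fin n × Fin d => ((p.1:ℕ) = (k:ℕ) ∨ (p.1:ℕ) + 1 = (k:ℕ))) ⊆
        Finset.univ.filter (fun p : Fin n × Fin d => p.1 = k) ∪
        Finset.univ.filter (fun p : Fin n × Fin d => p.1 = k') := by
      intro p hp
      rw [Finset.mem_filter] at hp
      rcases hcov _ hp.2 with h | h <;>
        simp [Finset.mem_union, Finset.mem_filter, Fin.ext_iff, h]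
    have hb1 : (∑ p ∈ Finset.univ.filter
        (fun p : Fin n × Fin d => ((p.1:ℕ) = (k:ℕ) ∨ (p.1:ℕ) + 1 = (k:ℕ))),
        ((a - b) p) ^ 2) ≤ blockNorm n d (a - b) k ^ 2 + blockNorm n d (a - b) k' ^ 2 := by
      calc _ ≤ ∑ p ∈ (Finset.univ.filter (fun p : Fin n × Fin d => p.1 = k) ∪
            Finset.univ.filter (fun p : Fin n × Fin d => p.1 = k')), ((a - b) p) ^ 2 :=
            Finset.sum_le_sum_of_subset_of_nonneg hsubset (fun p _ _ => sq_nonneg _)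
        _ ≤ (∑ p ∈ Finset.univ.filter (fun p : Fin n × Fin d => p.1 = k), ((a - b) p) ^ 2)
            + ∑ p ∈ Finset.univ.filter (fun p : Fin n × Fin d => p.1 = k'), ((a - b) p) ^ 2 := by
            have : (∑ p ∈ (Finset.univ.filter (fun p : Fin n × Fin d => p.1 = k) ∪
                  Finset.univ.filter (fun p : Fin n × Fin d => p.1 = k')), ((a - b) p) ^ 2)
                + ∑ p ∈ (Finset.univ.filter (fun p : Fin n × Fin d => p.1 = k) ∩
                  Finset.univ.filter (fun p : Fin n × Fin d => p.1 = k')), ((a - b) p) ^ 2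
                = (∑ p ∈ Finset.univ.filter (fun p : Fin n × Fin d => p.1 = k), ((a - b) p) ^ 2)
                + ∑ p ∈ Finset.univ.filter (fun p : Fin n × Fin d => p.1 = k'), ((a - b) p) ^ 2 :=
              Finset.sum_union_inter
            have hnn : 0 ≤ ∑ p ∈ (Finset.univ.filter (fun p : Fin n × Fin d => p.1 = k) ∩
                Finset.univ.filter (fun p : Fin n × Fin d => p.1 = k')), ((a - b) p) ^ 2 :=
              Finset.sum_nonneg fun p _ => sq_nonneg _
            linarith
        _ = _ := by rw [sum_block, sum_block, sq_blockNorm, sq_blockNorm]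
    calc Real.sqrt _ ≤ Real.sqrt (blockNorm n d (a - b) k ^ 2 + blockNorm n d (a - b) k' ^ 2) :=
          Real.sqrt_le_sqrt hb1
      _ ≤ Real.sqrt ((blockNorm n d (a - b) k + blockNorm n d (a - b) k') ^ 2) := by
          refine Real.sqrt_le_sqrt ?_
          have g1 := blockNorm_nonneg (a - b) k
          have g2 := blockNorm_nonneg (a - b) k'
          nlinarith
      _ = blockNorm n d (a - b) k + blockNorm n d (a - b) k' := by
          have g1 := blockNorm_nonneg (a - b) k
          have g2 := blockNorm_nonneg (a - b) k'
          rw [Real.sqrt_sq (by linarith)]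
  calc blockNorm n d (F t a - F t b) k = blockNorm n d (F t a' - F t b) k := h1
    _ ≤ ‖F t a' - F t b‖ := h2
    _ ≤ (κ : ℝ) * ‖a' - b‖ := h3
    _ ≤ _ := by
        have : (0:ℝ) ≤ (κ:ℝ) := κ.2
        nlinarith [h4]

lemma casc_trunc_lip
    (hLip : ∀ t, LipschitzWith κ (F t))
    (hcasc : ∀ (t : ℝ) (a b : EuclideanSpace ℝ (Fin n × Fin d)) (k : Fin n),
      (∀ p : Fin n × Fin d, ((p.1:ℕ) = (k:ℕ) ∨ (p.1:ℕ) + 1 = (k:ℕ)) → a p = b p) →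
      ∀ q : Fin d, F t a (k, q) = F t b (k, q))
    (t : ℝ) (a b : EuclideanSpace ℝ (Fin n × Fin d)) (i : Fin n) :
    ‖truncCLM n d i (F t a - F t b)‖ ≤ (2 * n * κ) * ‖truncCLM n d i (a - b)‖ := by
  calc ‖truncCLM n d i (F t a - F t b)‖
      ≤ ∑ k ∈ Finset.Iic i, blockNorm n d (F t a - F t b) k := norm_trunc_le_sum _ _
    _ ≤ ∑ k ∈ Finset.Iic i, (2 * κ) * ‖truncCLM n d i (a - b)‖ := by
        refine Finset.sum_le_sum fun k hk => ?_
        obtain ⟨k', hk'1, _, hcov⟩ := casc_pred k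
        rw [Finset.mem_Iic] at hk
        have hk'le : k' ≤ i := le_trans (Fin.le_def.mpr hk'1) hk
        calc blockNorm n d (F t a - F t b) k
            ≤ (κ : ℝ) * (blockNorm n d (a - b) k + blockNorm n d (a - b) k') :=
              casc_block_lip hLip hcasc t a b k k' hcov
          _ ≤ (κ : ℝ) * (‖truncCLM n d i (a - b)‖ + ‖truncCLM n d i (a - b)‖) := by
              have h1 := blockNorm_le_norm_trunc hk (a - b)
              have h2 := blockNorm_le_norm_trunc hk'le (a - b)
              have : (0:ℝ) ≤ (κ:ℝ) := κ.2
              nlinarith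
          _ = (2 * κ) * ‖truncCLM n d i (a - b)‖ := by ring
    _ ≤ ∑ k ∈ Finset.Iic i, (2 * κ) * ‖truncCLM n d i (a - b)‖ + 0 := by linarith
    _ ≤ (2 * n * κ) * ‖truncCLM n d i (a - b)‖ := by
        rw [Finset.sum_const, add_zero, nsmul_eq_mul]
        have hcard : ((Finset.Iic i).card : ℝ) ≤ (n : ℝ) := by
          have := Finset.card_le_univ (Finset.Iic i)
          simp only [Finset.card_univ, Fintype.card_fin] at this
          exact_mod_cast this
        have h0 : (0:ℝ) ≤ 2 * κ * ‖truncCLM n d i (a - b)‖ := by positivity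
        nlinarith

section Part3
variable {n d : ℕ} {κ : NNReal}
  {F : ℝ → EuclideanSpace ℝ (Fin n × Fin d) → EuclideanSpace ℝ (Fin n × Fin d)}

lemma hasDerivAt_pow_shift (e : ℕ) (t v : ℝ) :
    HasDerivAt (fun v => (v - t) ^ e) ((e : ℝ) * (v - t) ^ (e - 1)) v := by
  have h := (hasDerivAt_pow e (v - t)).comp v ((hasDerivAt_id v).sub_const t)
  rw [mul_one] at h
  exact h

lemma trunc_gronwall_fwd
    (hLip : ∀ t, LipschitzWith κ (F t))
    (hcasc : ∀ (t : ℝ) (a b : EuclideanSpace ℝ (Fin n × Fin d)) (k : Fin n),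
      (∀ p : Fin n × Fin d, ((p.1:ℕ) = (k:ℕ) ∨ (p.1:ℕ) + 1 = (k:ℕ)) → a p = b p) →
      ∀ q : Fin d, F t a (k, q) = F t b (k, q))
    (γ₁ γ₂ : ℝ → EuclideanSpace ℝ (Fin n × Fin d))
    (hγ₁ : ∀ u, HasDerivAt γ₁ (F u (γ₁ u)) u)
    (hγ₂ : ∀ u, HasDerivAt γ₂ (F u (γ₂ u)) u)
    (t b : ℝ) (i : Fin n) :
    ∀ u ∈ Set.Icc t b, ‖truncCLM n d i (γ₁ u - γ₂ u)‖ ≤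
      ‖truncCLM n d i (γ₁ t - γ₂ t)‖ * Real.exp ((2 * n * κ) * (u - t)) := by
  set f : ℝ → EuclideanSpace ℝ (Fin n × Fin d) :=
    fun u => truncCLM n d i (γ₁ u - γ₂ u) with hf
  have hdf : ∀ u, HasDerivAt f (truncCLM n d i (F u (γ₁ u) - F u (γ₂ u))) u := fun u =>
    (truncCLM n d i).hasFDerivAt.comp_hasDerivAt u ((hγ₁ u).sub (hγ₂ u))
  have hcont : ContinuousOn f (Set.Icc t b) := fun u _ =>
    ((hdf u).continuousAt).continuousWithinAt
  have hbound : ∀ u ∈ Set.Ico t b,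
      ‖truncCLM n d i (F u (γ₁ u) - F u (γ₂ u))‖ ≤ (2 * n * κ) * ‖f u‖ + 0 := by
    intro u _
    rw [add_zero]
    exact casc_trunc_lip hLip hcasc u (γ₁ u) (γ₂ u) i
  intro u hu
  have := norm_le_gronwallBound_of_norm_deriv_right_le hcont
    (fun v _ => (hdf v).hasDerivWithinAt) le_rfl hbound u hu
  rwa [gronwallBound_ε0] at this

lemma uniq_fwd
    (hLip : ∀ t, LipschitzWith κ (F t))
    (γ₁ γ₂ : ℝ → EuclideanSpace ℝ (Fin n × Fin d))
    (hγ₁ : ∀ u, HasDerivAt γ₁ (F u (γ₁ u)) u)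
    (hγ₂ : ∀ u, HasDerivAt γ₂ (F u (γ₂ u)) u)
    (t u : ℝ) (htu : t ≤ u) (h : γ₁ t = γ₂ t) : γ₁ u = γ₂ u := by
  have hc1 : ContinuousOn γ₁ (Set.Icc t u) := fun v _ => (hγ₁ v).continuousAt.continuousWithinAt
  have hc2 : ContinuousOn γ₂ (Set.Icc t u) := fun v _ => (hγ₂ v).continuousAt.continuousWithinAt
  have := dist_le_of_trajectories_ODE (v := F) (K := κ) hLip hc1
    (fun v _ => (hγ₁ v).hasDerivWithinAt) hc2 (fun v _ => (hγ₂ v).hasDerivWithinAt)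
    (by rw [h, dist_self]) u ⟨htu, le_rfl⟩
  rw [zero_mul] at this
  exact dist_le_zero.mp this

lemma reflect_deriv (γ : ℝ → EuclideanSpace ℝ (Fin n × Fin d))
    (hγ : ∀ u, HasDerivAt γ (F u (γ u)) u) (c : ℝ) :
    ∀ v, HasDerivAt (fun v => γ (c - v)) (-(F (c - v) (γ (c - v)))) v := by
  intro v
  have h1 : HasDerivAt (fun v : ℝ => c - v) (-1) v := by
    simpa using (hasDerivAt_id v).const_sub c
  have := HasDerivAt.scomp v (hγ (c - v)) h1
  rw [neg_one_smul] at this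
  exact this

lemma uniq
    (hLip : ∀ t, LipschitzWith κ (F t))
    (γ₁ γ₂ : ℝ → EuclideanSpace ℝ (Fin n × Fin d))
    (hγ₁ : ∀ u, HasDerivAt γ₁ (F u (γ₁ u)) u)
    (hγ₂ : ∀ u, HasDerivAt γ₂ (F u (γ₂ u)) u)
    (t : ℝ) (h : γ₁ t = γ₂ t) : ∀ u, γ₁ u = γ₂ u := by
  intro u
  rcases le_total t u with htu | hut
  · exact uniq_fwd hLip γ₁ γ₂ hγ₁ hγ₂ t u htu h
  · set G : ℝ → EuclideanSpace ℝ (Fin n × Fin d) → EuclideanSpace ℝ (Fin n × Fin d) :=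
      fun v => -(F (2 * t - v)) with hG
    have hGLip : ∀ v, LipschitzWith κ (G v) := fun v => (hLip (2 * t - v)).neg
    have hd1 : ∀ v, HasDerivAt (fun v => γ₁ (2 * t - v)) (G v (γ₁ (2 * t - v))) v :=
      reflect_deriv γ₁ hγ₁ (2 * t)
    have hd2 : ∀ v, HasDerivAt (fun v => γ₂ (2 * t - v)) (G v (γ₂ (2 * t - v))) v :=
      reflect_deriv γ₂ hγ₂ (2 * t)
    have heq : (fun v => γ₁ (2 * t - v)) t = (fun v => γ₂ (2 * t - v)) t := by
      simp only []
      rw [show 2 * t - t = t by ring, h]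
    have := uniq_fwd hGLip _ _ hd1 hd2 t (2 * t - u) (by linarith) heq
    simpa [show 2 * t - (2 * t - u) = u by ring] using this

end Part3
section Part4
variable {n d : ℕ}

lemma pow_dominate {w R : ℝ} (hw0 : 0 ≤ w) (hwR : w ≤ R) (hR : 1 ≤ R)
    {p e : ℕ} (hpn : p ≤ n) (hep : e ≤ p + 1) :
    w ^ p ≤ R ^ (n + 1) * ((e : ℝ) * w ^ (e - 1) + w ^ e) := by
  have hR0 : (0:ℝ) ≤ R := le_trans zero_le_one hR
  rcases Nat.eq_zero_or_pos e with he | he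
  · subst he
    simp only [Nat.cast_zero, zero_mul, pow_zero, zero_add, mul_one]
    calc w ^ p ≤ R ^ p := pow_le_pow_left₀ hw0 hwR p
      _ ≤ R ^ (n + 1) := pow_le_pow_right₀ hR (by omega)
  · have he1 : e - 1 ≤ p := by omega
    have hsplit : w ^ p = w ^ (e - 1) * w ^ (p - (e - 1)) := by
      rw [← pow_add]
      congr 1
      omega
    have h1 : w ^ (p - (e - 1)) ≤ R ^ (n + 1) := by
      calc w ^ (p - (e - 1)) ≤ R ^ (p - (e - 1)) := pow_le_pow_left₀ hw0 hwR _
        _ ≤ R ^ (n + 1) := pow_le_pow_right₀ hR (by omega)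
    have he' : (1:ℝ) ≤ (e:ℝ) := by exact_mod_cast he
    have hwe : (0:ℝ) ≤ w ^ (e - 1) := pow_nonneg hw0 _
    have hwe2 : (0:ℝ) ≤ w ^ e := pow_nonneg hw0 _
    calc w ^ p = w ^ (e - 1) * w ^ (p - (e - 1)) := hsplit
      _ ≤ w ^ (e - 1) * R ^ (n + 1) := by
          exact mul_le_mul_of_nonneg_left h1 hwe
      _ ≤ R ^ (n + 1) * ((e : ℝ) * w ^ (e - 1)) := by
          rw [mul_comm]
          have : w ^ (e - 1) ≤ (e:ℝ) * w ^ (e - 1) := by nlinarith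
          exact mul_le_mul_of_nonneg_left this (by positivity)
      _ ≤ _ := by nlinarith [mul_nonneg (pow_nonneg hR0 (n+1)) hwe2]

set_option maxHeartbeats 2000000 in
lemma lemB (n d : ℕ) (κ : NNReal) (R : ℝ) (hR : 1 ≤ R) (m : ℕ) :
    ∃ D : ℝ, 1 ≤ D ∧
      ∀ (F : ℝ → EuclideanSpace ℝ (Fin n × Fin d) → EuclideanSpace ℝ (Fin n × Fin d)),
      (∀ t, LipschitzWith κ (F t)) →
      (∀ (t : ℝ) (a b : EuclideanSpace ℝ (Fin n × Fin d)) (k : Fin n),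
        (∀ p : Fin n × Fin d, ((p.1:ℕ) = (k:ℕ) ∨ (p.1:ℕ) + 1 = (k:ℕ)) → a p = b p) →
        ∀ q : Fin d, F t a (k, q) = F t b (k, q)) →
      ∀ (γ₁ γ₂ : ℝ → EuclideanSpace ℝ (Fin n × Fin d)),
      (∀ u, HasDerivAt γ₁ (F u (γ₁ u)) u) → (∀ u, HasDerivAt γ₂ (F u (γ₂ u)) u) →
      ∀ (t b : ℝ), b - t ≤ R → ∀ i : Fin n, ∀ u ∈ Set.Icc t b,
      blockNorm n d (γ₁ u - γ₂ u) i ≤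
        D * ∑ j ∈ Finset.Iic i, blockNorm n d (γ₁ t - γ₂ t) j *
          (u - t) ^ (min ((i:ℕ) - (j:ℕ)) m) := by
  induction m with
  | zero =>
    refine ⟨Real.exp (2 * n * κ * R), Real.one_le_exp (by positivity), ?_⟩
    intro F hLip hcasc γ₁ γ₂ hγ₁ hγ₂ t b hbR i u hu
    have h1 : blockNorm n d (γ₁ u - γ₂ u) i ≤ ‖truncCLM n d i (γ₁ u - γ₂ u)‖ :=
      blockNorm_le_norm_trunc le_rfl _
    have h2 := trunc_gronwall_fwd hLip hcasc γ₁ γ₂ hγ₁ hγ₂ t b i u hu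
    have h3 : ‖truncCLM n d i (γ₁ t - γ₂ t)‖ ≤
        ∑ j ∈ Finset.Iic i, blockNorm n d (γ₁ t - γ₂ t) j := norm_trunc_le_sum _ _
    have h4 : Real.exp ((2 * n * κ) * (u - t)) ≤ Real.exp (2 * n * κ * R) := by
      apply Real.exp_le_exp.mpr
      have : u - t ≤ R := by
        have := hu.2; linarith
      nlinarith [this, (by positivity : (0:ℝ) ≤ 2 * n * κ)]
    have h5 : ∑ j ∈ Finset.Iic i, blockNorm n d (γ₁ t - γ₂ t) j *
        (u - t) ^ (min ((i:ℕ) - (j:ℕ)) 0) =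
        ∑ j ∈ Finset.Iic i, blockNorm n d (γ₁ t - γ₂ t) j := by
      refine Finset.sum_congr rfl fun j _ => ?_
      rw [Nat.min_zero, pow_zero, mul_one]
    rw [h5]
    have hnn : (0:ℝ) ≤ ∑ j ∈ Finset.Iic i, blockNorm n d (γ₁ t - γ₂ t) j :=
      Finset.sum_nonneg fun j _ => blockNorm_nonneg _ _
    calc blockNorm n d (γ₁ u - γ₂ u) i ≤ ‖truncCLM n d i (γ₁ u - γ₂ u)‖ := h1
      _ ≤ ‖truncCLM n d i (γ₁ t - γ₂ t)‖ * Real.exp ((2 * n * κ) * (u - t)) := h2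
      _ ≤ (∑ j ∈ Finset.Iic i, blockNorm n d (γ₁ t - γ₂ t) j) * Real.exp (2 * n * κ * R) := by
          apply mul_le_mul h3 h4 (Real.exp_nonneg _) hnn
      _ = Real.exp (2 * n * κ * R) * ∑ j ∈ Finset.Iic i, blockNorm n d (γ₁ t - γ₂ t) j :=
          mul_comm _ _
  | succ m ih =>
    obtain ⟨D, hD1, hD⟩ := ih
    have hκ0 : (0:ℝ) ≤ (κ:ℝ) := κ.2
    have hR0 : (0:ℝ) < R := lt_of_lt_of_le zero_lt_one hR
    set c : ℝ := 2 * κ * D * R ^ (n + 1) + 1 with hc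
    have hc1 : 1 ≤ c := by
      have : (0:ℝ) ≤ 2 * κ * D * R ^ (n + 1) := by positivity
      linarith
    refine ⟨c * (1 + R), by nlinarith, ?_⟩
    intro F hLip hcasc γ₁ γ₂ hγ₁ hγ₂ t b hbR i
    obtain ⟨k', hk'le, hik', hcov⟩ := casc_pred i
    set a : Fin n → ℝ := fun j => blockNorm n d (γ₁ t - γ₂ t) j with ha
    have ha0 : ∀ j, 0 ≤ a j := fun j => blockNorm_nonneg _ _
    set e : Fin n → ℕ := fun j => min ((i:ℕ) - (j:ℕ)) (m + 1) with he
    set f : ℝ → EuclideanSpace ℝ (Fin d) :=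
      fun v => blockCLM n d i (γ₁ v - γ₂ v) with hfdef
    have hdf : ∀ v, HasDerivAt f (blockCLM n d i (F v (γ₁ v) - F v (γ₂ v))) v := fun v =>
      (blockCLM n d i).hasFDerivAt.comp_hasDerivAt v ((hγ₁ v).sub (hγ₂ v))
    set B : ℝ → ℝ := fun v => ∑ j ∈ Finset.Iic i,
      c * a j * ((v - t) ^ (e j) + (v - t) ^ (e j + 1)) with hB
    set B' : ℝ → ℝ := fun v => ∑ j ∈ Finset.Iic i,
      c * a j * ((e j : ℝ) * (v - t) ^ (e j - 1) + ((e j : ℝ) + 1) * (v - t) ^ (e j)) with hB'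
    have hBd : ∀ v, HasDerivAt B (B' v) v := by
      intro v
      refine HasDerivAt.fun_sum fun j _ => ?_
      have h1 := hasDerivAt_pow_shift (e j) t v
      have h2 := hasDerivAt_pow_shift (e j + 1) t v
      have h2' : HasDerivAt (fun v => (v - t) ^ (e j + 1))
          (((e j : ℝ) + 1) * (v - t) ^ (e j)) v := by
        have : ((e j + 1 : ℕ) : ℝ) = (e j : ℝ) + 1 := by push_cast; ring
        simpa [this] using h2
      exact (h1.add h2').const_mul _
    -- initial value
    have hBt : B t = c * a i := by
      rw [hB]
      simp only []
      rw [Finset.sum_eq_single i]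
      · rw [sub_self]
        have hei : e i = 0 := by simp [he]
        rw [hei]
        norm_num
      · intro j hj hji
        rw [sub_self]
        have hj' : (j:ℕ) ≤ (i:ℕ) := Fin.le_def.mp (Finset.mem_Iic.mp hj)
        have hne : (j:ℕ) ≠ (i:ℕ) := fun h => hji (Fin.ext h)
        have hej : e j ≠ 0 := by simp only [he]; omega
        rw [zero_pow hej, zero_pow (by omega : e j + 1 ≠ 0)]
        ring
      · intro h
        exact absurd (Finset.mem_Iic.mpr le_rfl) h
    have hc0 : (0:ℝ) ≤ c := by linarith
    have ha_t : ‖f t‖ ≤ B t := by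
      rw [hBt]
      have hft : ‖f t‖ = a i := by
        rw [hfdef, ha]
        exact (blockNorm_eq_norm i _).symm
      rw [hft]
      nlinarith [ha0 i]
    -- derivative bound
    have hbound : ∀ v ∈ Set.Ico t b, ‖blockCLM n d i (F v (γ₁ v) - F v (γ₂ v))‖ ≤ B' v := by
      intro v hv
      have hv' : v ∈ Set.Icc t b := ⟨hv.1, le_of_lt hv.2⟩
      set w : ℝ := v - t with hw
      have hw0 : 0 ≤ w := sub_nonneg.mpr hv.1
      have hwR : w ≤ R := by
        have h1 := hv.2.le
        simp only [hw]
        linarith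
      have hn1 : ‖blockCLM n d i (F v (γ₁ v) - F v (γ₂ v))‖ =
          blockNorm n d (F v (γ₁ v) - F v (γ₂ v)) i := (blockNorm_eq_norm i _).symm
      have hcasc1 : blockNorm n d (F v (γ₁ v) - F v (γ₂ v)) i ≤
          (κ:ℝ) * (blockNorm n d (γ₁ v - γ₂ v) i + blockNorm n d (γ₁ v - γ₂ v) k') :=
        casc_block_lip hLip hcasc v (γ₁ v) (γ₂ v) i k' hcov
      have hIi := hD F hLip hcasc γ₁ γ₂ hγ₁ hγ₂ t b hbR i v hv'
      have hIk := hD F hLip hcasc γ₁ γ₂ hγ₁ hγ₂ t b hbR k' v hv'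
      have hIk2 : blockNorm n d (γ₁ v - γ₂ v) k' ≤
          D * ∑ j ∈ Finset.Iic i, a j * w ^ (min ((k':ℕ) - (j:ℕ)) m) := by
        refine le_trans hIk ?_
        have hsub : Finset.Iic k' ⊆ Finset.Iic i :=
          Finset.Iic_subset_Iic.mpr (Fin.le_def.mpr hk'le)
        refine mul_le_mul_of_nonneg_left ?_ (by linarith)
        refine Finset.sum_le_sum_of_subset_of_nonneg hsub fun j _ _ => ?_
        exact mul_nonneg (ha0 j) (pow_nonneg hw0 _)
      set g : Fin n → ℝ := fun j => (e j : ℝ) * w ^ (e j - 1) + w ^ (e j) with hg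
      have hg0 : ∀ j, 0 ≤ g j := by
        intro j
        rw [hg]
        have h1 : (0:ℝ) ≤ w ^ (e j) := pow_nonneg hw0 _
        have h2 : (0:ℝ) ≤ (e j : ℝ) * w ^ (e j - 1) :=
          mul_nonneg (Nat.cast_nonneg _) (pow_nonneg hw0 _)
        simp only []
        linarith
      set S : ℝ := ∑ j ∈ Finset.Iic i, a j * g j with hS
      have hS0 : 0 ≤ S := Finset.sum_nonneg fun j _ => mul_nonneg (ha0 j) (hg0 j)
      have hS1 : (∑ j ∈ Finset.Iic i, a j * w ^ (min ((i:ℕ) - (j:ℕ)) m)) ≤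
          R ^ (n+1) * S := by
        rw [hS, Finset.mul_sum]
        refine Finset.sum_le_sum fun j hj => ?_
        rw [show R ^ (n+1) * (a j * g j) = a j * (R ^ (n+1) * g j) by ring]
        refine mul_le_mul_of_nonneg_left ?_ (ha0 j)
        refine pow_dominate hw0 hwR hR ?_ ?_
        · have := i.isLt; omega
        · simp only [he]; omega
      have hS2 : (∑ j ∈ Finset.Iic i, a j * w ^ (min ((k':ℕ) - (j:ℕ)) m)) ≤
          R ^ (n+1) * S := by
        rw [hS, Finset.mul_sum]
        refine Finset.sum_le_sum fun j hj => ?_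
        rw [show R ^ (n+1) * (a j * g j) = a j * (R ^ (n+1) * g j) by ring]
        refine mul_le_mul_of_nonneg_left ?_ (ha0 j)
        refine pow_dominate hw0 hwR hR ?_ ?_
        · have := k'.isLt; omega
        · simp only [he]; omega
      have hBpge : c * S ≤ B' v := by
        rw [hB', hS, Finset.mul_sum]
        refine Finset.sum_le_sum fun j hj => ?_
        have h1 : (0:ℝ) ≤ w ^ (e j) := pow_nonneg hw0 _
        have hgle : g j ≤ (e j : ℝ) * w ^ (e j - 1) + ((e j : ℝ) + 1) * w ^ (e j) := by
          rw [hg]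
          simp only []
          nlinarith [mul_nonneg (Nat.cast_nonneg (e j) : (0:ℝ) ≤ (e j : ℝ)) h1]
        calc c * (a j * g j)
            ≤ c * (a j * ((e j : ℝ) * w ^ (e j - 1) + ((e j : ℝ) + 1) * w ^ (e j))) := by
              exact mul_le_mul_of_nonneg_left (mul_le_mul_of_nonneg_left hgle (ha0 j)) hc0
          _ = c * a j * ((e j : ℝ) * w ^ (e j - 1) + ((e j : ℝ) + 1) * w ^ (e j)) := by ring
      have hfinal : (κ:ℝ) * (blockNorm n d (γ₁ v - γ₂ v) i + blockNorm n d (γ₁ v - γ₂ v) k')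
          ≤ c * S := by
        have hb1 : blockNorm n d (γ₁ v - γ₂ v) i ≤ D * (R ^ (n+1) * S) := by
          refine le_trans hIi ?_
          exact mul_le_mul_of_nonneg_left hS1 (by linarith)
        have hb2 : blockNorm n d (γ₁ v - γ₂ v) k' ≤ D * (R ^ (n+1) * S) := by
          refine le_trans hIk2 ?_
          exact mul_le_mul_of_nonneg_left hS2 (by linarith)
        have hRn : (0:ℝ) ≤ R ^ (n+1) := pow_nonneg (le_of_lt hR0) _
        have hDRS : (0:ℝ) ≤ D * (R ^ (n+1) * S) :=
          mul_nonneg (by linarith) (mul_nonneg hRn hS0)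
        calc (κ:ℝ) * (blockNorm n d (γ₁ v - γ₂ v) i + blockNorm n d (γ₁ v - γ₂ v) k')
            ≤ (κ:ℝ) * (2 * (D * (R ^ (n+1) * S))) := by
              have hbn1 : (0:ℝ) ≤ blockNorm n d (γ₁ v - γ₂ v) i := blockNorm_nonneg _ _
              have hbn2 : (0:ℝ) ≤ blockNorm n d (γ₁ v - γ₂ v) k' := blockNorm_nonneg _ _
              nlinarith
          _ = (2 * κ * D * R ^ (n+1)) * S := by ring
          _ ≤ c * S := by
              rw [hc]
              nlinarith
      rw [hn1]
      exact le_trans hcasc1 (le_trans hfinal hBpge)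
    have hcont : ContinuousOn f (Set.Icc t b) := fun v _ =>
      (hdf v).continuousAt.continuousWithinAt
    have hbar := image_norm_le_of_norm_deriv_right_le_deriv_boundary hcont
      (fun v _ => (hdf v).hasDerivWithinAt) ha_t hBd hbound
    intro u hu
    have h1 : blockNorm n d (γ₁ u - γ₂ u) i = ‖f u‖ := blockNorm_eq_norm i _
    have h2 := hbar hu
    have hu0 : 0 ≤ u - t := sub_nonneg.mpr hu.1
    have huR : u - t ≤ R := by
      have := hu.2
      linarith
    have h3 : B u ≤ c * (1 + R) * ∑ j ∈ Finset.Iic i, a j * (u - t) ^ (e j) := by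
      rw [hB, Finset.mul_sum]
      refine Finset.sum_le_sum fun j hj => ?_
      have hx : (0:ℝ) ≤ (u - t) ^ (e j) := pow_nonneg hu0 _
      have hy : (u - t) ^ (e j + 1) ≤ R * (u - t) ^ (e j) := by
        rw [pow_succ]
        calc (u - t) ^ (e j) * (u - t) ≤ (u - t) ^ (e j) * R :=
              mul_le_mul_of_nonneg_left huR hx
          _ = R * (u - t) ^ (e j) := mul_comm _ _
      calc c * a j * ((u - t) ^ (e j) + (u - t) ^ (e j + 1))
          ≤ c * a j * ((u - t) ^ (e j) + R * (u - t) ^ (e j)) := by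
            refine mul_le_mul_of_nonneg_left (by linarith) (mul_nonneg hc0 (ha0 j))
        _ = c * (1 + R) * (a j * (u - t) ^ (e j)) := by ring
    rw [h1]
    refine le_trans h2 (le_trans h3 ?_)
    exact le_of_eq (by rw [ha, he])

end Part4
section Part5
variable {n d : ℕ} {κ : NNReal}

set_option maxHeartbeats 1000000 in
lemma main_est (n d : ℕ) (κ : NNReal) (T : ℝ) (hT : 0 < T)
    (F : ℝ → EuclideanSpace ℝ (Fin n × Fin d) → EuclideanSpace ℝ (Fin n × Fin d))
    (hLip : ∀ t, LipschitzWith κ (F t))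
    (hcasc : ∀ (t : ℝ) (a b : EuclideanSpace ℝ (Fin n × Fin d)) (k : Fin n),
      (∀ p : Fin n × Fin d, ((p.1:ℕ) = (k:ℕ) ∨ (p.1:ℕ) + 1 = (k:ℕ)) → a p = b p) →
      ∀ q : Fin d, F t a (k, q) = F t b (k, q))
    (θ : ℝ → ℝ → EuclideanSpace ℝ (Fin n × Fin d) → EuclideanSpace ℝ (Fin n × Fin d))
    (hflow0 : ∀ s x, θ s s x = x)
    (hflow : ∀ s x t, HasDerivAt (fun u => θ u s x) (F t (θ t s x)) t) :
    ∃ D : ℝ, 1 ≤ D ∧ ∀ s t : ℝ, s ∈ Set.Icc (-T) T → t ∈ Set.Icc (-T) T →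
      ∀ p q : EuclideanSpace ℝ (Fin n × Fin d), ∀ i : Fin n,
      blockNorm n d (θ s t p - θ s t q) i ≤
        D * ∑ j ∈ Finset.Iic i, blockNorm n d (p - q) j * |s - t| ^ ((i:ℕ) - (j:ℕ)) := by
  obtain ⟨D, hD1, hD⟩ := lemB n d κ (1 + 2 * T) (by linarith) n
  refine ⟨D, hD1, ?_⟩
  intro s t hs ht p q i
  have hγ₁ : ∀ u, HasDerivAt (fun u => θ u t p) (F u (θ u t p)) u := fun u => hflow t p u
  have hγ₂ : ∀ u, HasDerivAt (fun u => θ u t q) (F u (θ u t q)) u := fun u => hflow t q u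
  have hmin : ∀ j : Fin n, min ((i:ℕ) - (j:ℕ)) n = (i:ℕ) - (j:ℕ) := by
    intro j
    have := i.isLt
    omega
  rcases le_total t s with hst | hts
  · have hbR : s - t ≤ 1 + 2 * T := by
      have h1 := hs.2; have h2 := ht.1; linarith
    have h := hD F hLip hcasc _ _ hγ₁ hγ₂ t s hbR i s ⟨hst, le_rfl⟩
    have habs : |s - t| = s - t := abs_of_nonneg (by linarith)
    calc blockNorm n d (θ s t p - θ s t q) i
        ≤ D * ∑ j ∈ Finset.Iic i, blockNorm n d (θ t t p - θ t t q) j *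
          (s - t) ^ (min ((i:ℕ) - (j:ℕ)) n) := h
      _ = D * ∑ j ∈ Finset.Iic i, blockNorm n d (p - q) j * |s - t| ^ ((i:ℕ) - (j:ℕ)) := by
          congr 1
          refine Finset.sum_congr rfl fun j _ => ?_
          rw [hflow0, hflow0, hmin j, habs]
  · -- reflect
    set G : ℝ → EuclideanSpace ℝ (Fin n × Fin d) → EuclideanSpace ℝ (Fin n × Fin d) :=
      fun v => -(F (2 * t - v)) with hG
    have hGLip : ∀ v, LipschitzWith κ (G v) := fun v => (hLip (2 * t - v)).neg
    have hGcasc : ∀ (τ : ℝ) (a b : EuclideanSpace ℝ (Fin n × Fin d)) (k : Fin n),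
        (∀ p' : Fin n × Fin d, ((p'.1:ℕ) = (k:ℕ) ∨ (p'.1:ℕ) + 1 = (k:ℕ)) → a p' = b p') →
        ∀ q' : Fin d, G τ a (k, q') = G τ b (k, q') := by
      intro τ a b k hab q'
      show -(F (2 * t - τ) a) (k, q') = -(F (2 * t - τ) b) (k, q')
      show -(F (2 * t - τ) a (k, q')) = -(F (2 * t - τ) b (k, q'))
      rw [hcasc (2 * t - τ) a b k hab q']
    have hd1 : ∀ v, HasDerivAt (fun v => θ (2 * t - v) t p)
        (G v (θ (2 * t - v) t p)) v := reflect_deriv _ hγ₁ (2 * t)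
    have hd2 : ∀ v, HasDerivAt (fun v => θ (2 * t - v) t q)
        (G v (θ (2 * t - v) t q)) v := reflect_deriv _ hγ₂ (2 * t)
    have hbR : (2 * t - s) - t ≤ 1 + 2 * T := by
      have h1 := ht.2; have h2 := hs.1; linarith
    have h := hD G hGLip hGcasc _ _ hd1 hd2 t (2 * t - s) hbR i (2 * t - s)
      ⟨by linarith, le_rfl⟩
    have habs : |s - t| = (2 * t - s) - t := by
      rw [abs_of_nonpos (by linarith)]; ring
    have e1 : 2 * t - (2 * t - s) = s := by ring
    have e2 : 2 * t - t = t := by ring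
    rw [e1, e2] at h
    calc blockNorm n d (θ s t p - θ s t q) i
        ≤ D * ∑ j ∈ Finset.Iic i, blockNorm n d (θ t t p - θ t t q) j *
          ((2 * t - s) - t) ^ (min ((i:ℕ) - (j:ℕ)) n) := h
      _ = D * ∑ j ∈ Finset.Iic i, blockNorm n d (p - q) j * |s - t| ^ ((i:ℕ) - (j:ℕ)) := by
          congr 1
          refine Finset.sum_congr rfl fun j _ => ?_
          rw [hflow0, hflow0, hmin j, habs]

lemma flow_inv
    {F : ℝ → EuclideanSpace ℝ (Fin n × Fin d) → EuclideanSpace ℝ (Fin n × Fin d)}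
    (hLip : ∀ t, LipschitzWith κ (F t))
    (θ : ℝ → ℝ → EuclideanSpace ℝ (Fin n × Fin d) → EuclideanSpace ℝ (Fin n × Fin d))
    (hflow0 : ∀ s x, θ s s x = x)
    (hflow : ∀ s x t, HasDerivAt (fun u => θ u s x) (F t (θ t s x)) t) :
    ∀ s t x, θ s t (θ t s x) = x := by
  intro s t x
  have h := uniq hLip (fun u => θ u t (θ t s x)) (fun u => θ u s x)
    (fun u => hflow t (θ t s x) u) (fun u => hflow s x u) t
    (by simpa using hflow0 t (θ t s x)) s
  simpa [hflow0] using h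

lemma real_rpow_add_le {x y p : ℝ} (hx : 0 ≤ x) (hy : 0 ≤ y) (hp0 : 0 ≤ p) (hp1 : p ≤ 1) :
    (x + y) ^ p ≤ x ^ p + y ^ p := by
  have h := NNReal.rpow_add_le_add_rpow (⟨x, hx⟩ : NNReal) ⟨y, hy⟩ hp0 hp1
  have h2 := (NNReal.coe_le_coe).mpr h
  push_cast [NNReal.coe_rpow] at h2
  exact h2

lemma rpow_sum_le {ι : Type*} (s : Finset ι) (f : ι → ℝ) (hf : ∀ j, 0 ≤ f j)
    {p : ℝ} (hp0 : 0 < p) (hp1 : p ≤ 1) :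
    (∑ j ∈ s, f j) ^ p ≤ ∑ j ∈ s, (f j) ^ p := by
  classical
  induction s using Finset.induction_on with
  | empty => simp [Real.zero_rpow hp0.ne']
  | @insert a s ha ih =>
    rw [Finset.sum_insert ha, Finset.sum_insert ha]
    calc (f a + ∑ j ∈ s, f j) ^ p ≤ (f a) ^ p + (∑ j ∈ s, f j) ^ p :=
          real_rpow_add_le (hf a) (Finset.sum_nonneg fun j _ => hf j) hp0.le hp1
      _ ≤ (f a) ^ p + ∑ j ∈ s, (f j) ^ p := by linarith [ih]

lemma rho_nonneg (u : ℝ) (z : EuclideanSpace ℝ (Fin n × Fin d)) : 0 ≤ rho n d u z :=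
  add_nonneg (Real.rpow_nonneg (abs_nonneg u) _)
    (Finset.sum_nonneg fun i _ => Real.rpow_nonneg (blockNorm_nonneg z i) _)

lemma abs_le_rho (u : ℝ) (z : EuclideanSpace ℝ (Fin n × Fin d)) :
    |u| ^ ((1:ℝ)/2) ≤ rho n d u z :=
  le_add_of_nonneg_right (Finset.sum_nonneg fun i _ =>
    Real.rpow_nonneg (blockNorm_nonneg z i) _)

lemma term_le_rho (u : ℝ) (z : EuclideanSpace ℝ (Fin n × Fin d)) (j : Fin n) :
    blockNorm n d z j ^ ((1:ℝ) / (2 * (j:ℕ) + 1)) ≤ rho n d u z := by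
  unfold rho
  have h1 : blockNorm n d z j ^ ((1:ℝ) / (2 * (j:ℕ) + 1)) ≤
      ∑ i : Fin n, blockNorm n d z i ^ ((1:ℝ) / (2 * (i:ℕ) + 1)) :=
    Finset.single_le_sum (f := fun i => blockNorm n d z i ^ ((1:ℝ) / (2 * (i:ℕ) + 1)))
      (fun i _ => Real.rpow_nonneg (blockNorm_nonneg z i) _) (Finset.mem_univ j)
  have h2 : (0:ℝ) ≤ |u| ^ ((1:ℝ)/2) := Real.rpow_nonneg (abs_nonneg u) _
  linarith

lemma rho_neg (u : ℝ) (z : EuclideanSpace ℝ (Fin n × Fin d)) :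
    rho n d (-u) z = rho n d u z := by
  unfold rho
  rw [abs_neg]

end Part5
section Part6
variable {n d : ℕ}

/-- Young-type bound for a single term. -/
lemma young_term (n d : ℕ) {D A u : ℝ} (hD1 : 1 ≤ D)
    (z : EuclideanSpace ℝ (Fin n × Fin d)) (i j : Fin n) (hji : (j:ℕ) ≤ (i:ℕ))
    (hX : blockNorm n d z j ^ ((1:ℝ) / (2 * (j:ℕ) + 1)) ≤ A)
    (hY : |u| ^ ((1:ℝ)/2) ≤ A) :
    (D * (blockNorm n d z j * |u| ^ ((i:ℕ) - (j:ℕ)))) ^ ((1:ℝ) / (2 * (i:ℕ) + 1)) ≤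
      2 * D * A := by
  set ci : ℝ := ((i:ℕ) : ℝ) with hci
  set cj : ℝ := ((j:ℕ) : ℝ) with hcj
  have hcij : cj ≤ ci := by rw [hci, hcj]; exact_mod_cast hji
  have hcj0 : (0:ℝ) ≤ cj := Nat.cast_nonneg _
  have hdi : (0:ℝ) < 2 * ci + 1 := by positivity
  have hdj : (0:ℝ) < 2 * cj + 1 := by positivity
  set pi : ℝ := (1:ℝ) / (2 * ci + 1) with hpi
  set pj : ℝ := (1:ℝ) / (2 * cj + 1) with hpj
  have hpi0 : 0 < pi := by rw [hpi]; positivity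
  have hpi1 : pi ≤ 1 := by
    rw [hpi]
    rw [div_le_one hdi]
    have : (0:ℝ) ≤ ci := by rw [hci]; exact Nat.cast_nonneg _
    linarith
  set aj : ℝ := blockNorm n d z j with haj
  have haj0 : 0 ≤ aj := blockNorm_nonneg z j
  set Z : ℝ := |u| with hZ
  have hZ0 : 0 ≤ Z := abs_nonneg u
  set k : ℕ := (i:ℕ) - (j:ℕ) with hk
  have hck : (k : ℝ) = ci - cj := by
    rw [hk, hci, hcj]
    exact Nat.cast_sub hji
  set w1 : ℝ := (2 * cj + 1) / (2 * ci + 1) with hw1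
  set w2 : ℝ := (2 * (ci - cj)) / (2 * ci + 1) with hw2
  have hw10 : 0 ≤ w1 := by rw [hw1]; positivity
  have hw20 : 0 ≤ w2 := by
    rw [hw2]
    apply div_nonneg _ hdi.le
    linarith
  have hwsum : w1 + w2 = 1 := by
    rw [hw1, hw2]
    field_simp
    ring
  set X : ℝ := aj ^ pj with hX'
  set Y : ℝ := Z ^ ((1:ℝ)/2) with hY'
  have hX0 : 0 ≤ X := Real.rpow_nonneg haj0 _
  have hY0 : 0 ≤ Y := Real.rpow_nonneg hZ0 _
  -- rewrite the term
  have hsplit : (D * (aj * Z ^ k)) ^ pi = D ^ pi * (aj ^ pi * (Z ^ k) ^ pi) := by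
    rw [Real.mul_rpow (by linarith) (mul_nonneg haj0 (pow_nonneg hZ0 _)),
      Real.mul_rpow haj0 (pow_nonneg hZ0 _)]
  have h3 : aj ^ pi = X ^ w1 := by
    rw [hX', ← Real.rpow_mul haj0]
    congr 1
    rw [hpj, hpi, hw1]
    field_simp
  have h4 : (Z ^ k) ^ pi = Y ^ w2 := by
    rw [hY', ← Real.rpow_mul hZ0, ← Real.rpow_natCast Z k, ← Real.rpow_mul hZ0, hck]
    congr 1
    rw [hpi, hw2]
    field_simp
  have hgm : X ^ w1 * Y ^ w2 ≤ w1 * X + w2 * Y :=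
    Real.geom_mean_le_arith_mean2_weighted hw10 hw20 hX0 hY0 hwsum
  have hw11 : w1 ≤ 1 := by linarith
  have hw21 : w2 ≤ 1 := by linarith
  have hXY : w1 * X + w2 * Y ≤ X + Y := by nlinarith
  have hDpi : D ^ pi ≤ D := by
    calc D ^ pi ≤ D ^ (1:ℝ) := Real.rpow_le_rpow_of_exponent_le hD1 hpi1
      _ = D := Real.rpow_one D
  have hDpi0 : 0 ≤ D ^ pi := Real.rpow_nonneg (by linarith) _
  calc (D * (aj * Z ^ k)) ^ pi = D ^ pi * (X ^ w1 * Y ^ w2) := by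
        rw [hsplit, h3, h4]
    _ ≤ D ^ pi * (X + Y) := by
        exact mul_le_mul_of_nonneg_left (le_trans hgm hXY) hDpi0
    _ ≤ D * (X + Y) := by
        exact mul_le_mul_of_nonneg_right hDpi (by linarith)
    _ ≤ D * (A + A) := by
        refine mul_le_mul_of_nonneg_left ?_ (by linarith)
        have h5 : X ≤ A := by rw [hX', haj, hpj, hcj]; exact hX
        have h6 : Y ≤ A := by rw [hY', hZ]; exact hY
        linarith
    _ = 2 * D * A := by ring

set_option maxHeartbeats 1000000 in
lemma key (n d : ℕ) (κ : NNReal) (T : ℝ) (hT : 0 < T)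
    (F : ℝ → EuclideanSpace ℝ (Fin n × Fin d) → EuclideanSpace ℝ (Fin n × Fin d))
    (hLip : ∀ t, LipschitzWith κ (F t))
    (hcasc : ∀ (t : ℝ) (a b : EuclideanSpace ℝ (Fin n × Fin d)) (k : Fin n),
      (∀ p : Fin n × Fin d, ((p.1:ℕ) = (k:ℕ) ∨ (p.1:ℕ) + 1 = (k:ℕ)) → a p = b p) →
      ∀ q : Fin d, F t a (k, q) = F t b (k, q))
    (θ : ℝ → ℝ → EuclideanSpace ℝ (Fin n × Fin d) → EuclideanSpace ℝ (Fin n × Fin d))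
    (hflow0 : ∀ s x, θ s s x = x)
    (hflow : ∀ s x t, HasDerivAt (fun u => θ u s x) (F t (θ t s x)) t) :
    ∃ C : ℝ, 1 ≤ C ∧ ∀ s t : ℝ, s ∈ Set.Icc (-T) T → t ∈ Set.Icc (-T) T →
      ∀ p q : EuclideanSpace ℝ (Fin n × Fin d),
      rho n d (t - s) (θ s t p - θ s t q) ≤ C * rho n d (t - s) (p - q) := by
  obtain ⟨D, hD1, hMAIN⟩ := main_est n d κ T hT F hLip hcasc θ hflow0 hflow
  have hn2 : (0:ℝ) ≤ (n:ℝ) ^ 2 := sq_nonneg _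
  have hC1 : (1:ℝ) ≤ 1 + 2 * D * (n:ℝ) ^ 2 := by nlinarith
  refine ⟨1 + 2 * D * (n:ℝ) ^ 2, hC1, ?_⟩
  intro s t hs ht p q
  have hA0 : 0 ≤ rho n d (t - s) (p - q) := rho_nonneg _ _
  have habs : |s - t| = |t - s| := abs_sub_comm s t
  have hDA0 : (0:ℝ) ≤ 2 * D * rho n d (t - s) (p - q) := by nlinarith
  have hper : ∀ i : Fin n, blockNorm n d (θ s t p - θ s t q) i ^ ((1:ℝ)/(2*(i:ℕ)+1)) ≤
      (n:ℝ) * (2 * D * rho n d (t - s) (p - q)) := by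
    intro i
    have hpi0 : (0:ℝ) < 1/(2*((i:ℕ):ℝ)+1) := by positivity
    have hpi1 : (1:ℝ)/(2*((i:ℕ):ℝ)+1) ≤ 1 := by
      rw [div_le_one (by positivity)]
      have : (0:ℝ) ≤ ((i:ℕ):ℝ) := Nat.cast_nonneg _
      linarith
    have hm := hMAIN s t hs ht p q i
    rw [Finset.mul_sum] at hm
    have h1 : blockNorm n d (θ s t p - θ s t q) i ^ ((1:ℝ)/(2*(i:ℕ)+1)) ≤
        (∑ j ∈ Finset.Iic i, D * (blockNorm n d (p - q) j * |s - t| ^ ((i:ℕ) - (j:ℕ))))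
          ^ ((1:ℝ)/(2*(i:ℕ)+1)) :=
      Real.rpow_le_rpow (blockNorm_nonneg _ _) hm hpi0.le
    have hf0 : ∀ j : Fin n, 0 ≤ D * (blockNorm n d (p - q) j * |s - t| ^ ((i:ℕ) - (j:ℕ))) :=
      fun j => mul_nonneg (by linarith) (mul_nonneg (blockNorm_nonneg _ _)
        (pow_nonneg (abs_nonneg _) _))
    have h2 := rpow_sum_le (Finset.Iic i)
      (fun j => D * (blockNorm n d (p - q) j * |s - t| ^ ((i:ℕ) - (j:ℕ)))) hf0 hpi0 hpi1
    have h3 : ∀ j ∈ Finset.Iic i,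
        (D * (blockNorm n d (p - q) j * |s - t| ^ ((i:ℕ) - (j:ℕ))))
          ^ ((1:ℝ)/(2*(i:ℕ)+1)) ≤ 2 * D * rho n d (t - s) (p - q) := by
      intro j hj
      rw [habs]
      exact young_term n d hD1 (p - q) i j (Fin.le_def.mp (Finset.mem_Iic.mp hj))
        (term_le_rho (t - s) (p - q) j) (abs_le_rho (t - s) (p - q))
    have h4 : (∑ j ∈ Finset.Iic i,
        (D * (blockNorm n d (p - q) j * |s - t| ^ ((i:ℕ) - (j:ℕ))))
          ^ ((1:ℝ)/(2*(i:ℕ)+1))) ≤ (n:ℝ) * (2 * D * rho n d (t - s) (p - q)) := by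
      calc _ ≤ ∑ _j ∈ Finset.Iic i, 2 * D * rho n d (t - s) (p - q) := Finset.sum_le_sum h3
        _ = ((Finset.Iic i).card : ℝ) * (2 * D * rho n d (t - s) (p - q)) := by
            rw [Finset.sum_const, nsmul_eq_mul]
        _ ≤ (n:ℝ) * (2 * D * rho n d (t - s) (p - q)) := by
            refine mul_le_mul_of_nonneg_right ?_ hDA0
            have := Finset.card_le_univ (Finset.Iic i)
            simp only [Finset.card_univ, Fintype.card_fin] at this
            exact_mod_cast this
    exact le_trans h1 (le_trans h2 h4)
  have hsum : ∑ i : Fin n, blockNorm n d (θ s t p - θ s t q) i ^ ((1:ℝ)/(2*(i:ℕ)+1)) ≤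
      (n:ℝ) * ((n:ℝ) * (2 * D * rho n d (t - s) (p - q))) := by
    calc _ ≤ ∑ _i : Fin n, (n:ℝ) * (2 * D * rho n d (t - s) (p - q)) :=
          Finset.sum_le_sum fun i _ => hper i
      _ = (n:ℝ) * ((n:ℝ) * (2 * D * rho n d (t - s) (p - q))) := by
          rw [Finset.sum_const, Finset.card_univ, Fintype.card_fin, nsmul_eq_mul]
  have hY := abs_le_rho (t - s) (p - q)
  have hsum2 : ∑ i : Fin n, blockNorm n d (θ s t p - θ s t q) i ^ ((1:ℝ)/(2*(i:ℕ)+1)) ≤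
      2 * D * (n:ℝ) ^ 2 * rho n d (t - s) (p - q) := by
    refine le_trans hsum (le_of_eq ?_)
    ring
  calc rho n d (t - s) (θ s t p - θ s t q)
      = |t - s| ^ ((1:ℝ)/2) + ∑ i : Fin n, blockNorm n d (θ s t p - θ s t q) i
        ^ ((1:ℝ) / (2 * (i:ℕ) + 1)) := rfl
    _ ≤ rho n d (t - s) (p - q) + 2 * D * (n:ℝ) ^ 2 * rho n d (t - s) (p - q) :=
        add_le_add hY hsum2
    _ = (1 + 2 * D * (n:ℝ) ^ 2) * rho n d (t - s) (p - q) := by ring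

end Part6
end Stmt18Aux

/-- Global equivalence of the forward quasi-distance d((s,x),(t,y)) = ρ(t−s, θ_{t,s}(x)−y)
and the backward quasi-distance d*((s,x),(t,y)) = ρ(t−s, x−θ_{s,t}(y)), when the Lipschitz
vector field F has the strict subdiagonal cascade structure: block k of F depends only on
blocks k−1 and k (and block 0 only on block 0). -/
theorem stmt_18 (n d : ℕ) (hn : 1 ≤ n) (T : ℝ) (hT : 0 < T) (κ : NNReal)
    (F : ℝ → EuclideanSpace ℝ (Fin n × Fin d) → EuclideanSpace ℝ (Fin n × Fin d))
    (hLip : ∀ t, LipschitzWith κ (F t))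
    (hcasc : ∀ (t : ℝ) (a b : EuclideanSpace ℝ (Fin n × Fin d)) (k : Fin n),
      (∀ p : Fin n × Fin d, ((p.1:ℕ) = (k:ℕ) ∨ (p.1:ℕ) + 1 = (k:ℕ)) → a p = b p) →
      ∀ q : Fin d, F t a (k, q) = F t b (k, q))
    (θ : ℝ → ℝ → EuclideanSpace ℝ (Fin n × Fin d) → EuclideanSpace ℝ (Fin n × Fin d))
    (hflow0 : ∀ s x, θ s s x = x)
    (hflow : ∀ s x t, HasDerivAt (fun u => θ u s x) (F t (θ t s x)) t) :
    ∃ C : ℝ, 1 ≤ C ∧ ∀ s t : ℝ, s ∈ Set.Icc (-T) T → t ∈ Set.Icc (-T) T →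
      ∀ x y : EuclideanSpace ℝ (Fin n × Fin d),
      C⁻¹ * rho n d (t - s) (x - θ s t y) ≤ rho n d (t - s) (θ t s x - y) ∧
      rho n d (t - s) (θ t s x - y) ≤ C * rho n d (t - s) (x - θ s t y) := by
  obtain ⟨C, hC1, hKEY⟩ := Stmt18Aux.key n d κ T hT F hLip hcasc θ hflow0 hflow
  have hC0 : (0:ℝ) < C := lt_of_lt_of_le one_pos hC1
  have hinv := Stmt18Aux.flow_inv hLip θ hflow0 hflow
  refine ⟨C, hC1, ?_⟩
  intro s t hs ht x y
  constructor
  · have h1 := hKEY s t hs ht (θ t s x) y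
    rw [hinv s t x] at h1
    rw [inv_mul_le_iff₀ hC0]
    exact h1
  · have h2 := hKEY t s ht hs x (θ s t y)
    rw [hinv t s y] at h2
    rw [show s - t = -(t - s) by ring, Stmt18Aux.rho_neg, Stmt18Aux.rho_neg] at h2
    exact h2
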